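/- If the cut monoid M_G of a graph G is seminormal, then G is K5-minor-free. -/

import Mathlib

/-! Basic definitions for cut monoids of finite simple graphs. -/

open Classical in
/-- The cut vector of a vertex set `A`, as a function on `Sym2 V`:
value `1` on pairs with exactly one element in `A`, and `0` otherwise. -/
noncomputable def cutVec {V : Type} (A : Set V) : Sym2 V → ℤ :=
  Sym2.lift ⟨fun v w => if ((v ∈ A) ↔ (w ∈ A)) then 0 else 1,
    fun v w => if_congr iff_comm rfl rfl⟩

variable {V : Type}

/-- The generators `(δ_A, 1)` of the cut monoid of `G`. -/
def cutGens (G : SimpleGraph V) : Set ((G.edgeSet → ℤ) × ℤ) :=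
  {p | ∃ A : Set V, p = (fun e => cutVec A e.1, 1)}

/-- The cut monoid `M_G` of a graph `G`. -/
def cutMonoid (G : SimpleGraph V) : AddSubmonoid ((G.edgeSet → ℤ) × ℤ) :=
  AddSubmonoid.closure (cutGens G)

/-- The group `gp(M_G)` generated by the cut monoid. -/
def cutGroup (G : SimpleGraph V) : AddSubgroup ((G.edgeSet → ℤ) × ℤ) :=
  AddSubgroup.closure (cutGens G)

/-- `M_G` is normal: every `x ∈ gp(M_G)` with `n • x ∈ M_G` for some `n ≥ 1` lies in `M_G`. -/
def CutNormal (G : SimpleGraph V) : Prop :=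
  ∀ x ∈ cutGroup G, (∃ n : ℕ, 1 ≤ n ∧ n • x ∈ cutMonoid G) → x ∈ cutMonoid G

/-- `M_G` is seminormal: every `x ∈ gp(M_G)` with `2 • x ∈ M_G` and `3 • x ∈ M_G`
lies in `M_G`. -/
def CutSeminormal (G : SimpleGraph V) : Prop :=
  ∀ x ∈ cutGroup G, 2 • x ∈ cutMonoid G → 3 • x ∈ cutMonoid G → x ∈ cutMonoid G

/-- Generators of the cone of `M_G`: nonnegative real multiples of the `(δ_A, 1)`. -/
noncomputable def cutConeGens (G : SimpleGraph V) : Set ((G.edgeSet → ℝ) × ℝ) :=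
  {q | ∃ (c : ℝ) (A : Set V), 0 ≤ c ∧
    q = c • ((fun e => ((cutVec A e.1 : ℤ) : ℝ), (1 : ℝ)))}

/-- The cone `cone(M_G)`: all finite nonnegative real combinations of the `(δ_A, 1)`. -/
noncomputable def cutCone (G : SimpleGraph V) : Set ((G.edgeSet → ℝ) × ℝ) :=
  (AddSubmonoid.closure (cutConeGens G) : Set ((G.edgeSet → ℝ) × ℝ))

/-- The canonical map from `ℤ^E × ℤ` to `ℝ^E × ℝ`. -/
noncomputable def toRealCut (G : SimpleGraph V) (p : (G.edgeSet → ℤ) × ℤ) :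
    (G.edgeSet → ℝ) × ℝ :=
  (fun e => ((p.1 e : ℤ) : ℝ), ((p.2 : ℤ) : ℝ))

/-- `int(M_G)`: elements of `M_G` mapping into the topological interior of `cone(M_G)`. -/
noncomputable def cutInterior (G : SimpleGraph V) : Set ((G.edgeSet → ℤ) × ℤ) :=
  {p | p ∈ cutMonoid G ∧ toRealCut G p ∈ interior (cutCone G)}

/-- The set of last coordinates `α ∈ ℕ` realized by elements of `int(M_G)`;
its least element is `m(G)`. -/
noncomputable def cutDegrees (G : SimpleGraph V) : Set ℕ :=
  {α | ∃ x : G.edgeSet → ℤ, ((x, (α : ℤ)) : (G.edgeSet → ℤ) × ℤ) ∈ cutInterior G}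

/-- `H` is a minor of `G`: branch sets `B u` are nonempty, pairwise disjoint,
induce connected subgraphs, and edges of `H` are witnessed by edges of `G`. -/
def GraphMinor {W V : Type} (H : SimpleGraph W) (G : SimpleGraph V) : Prop :=
  ∃ B : W → Set V,
    (∀ u, (B u).Nonempty) ∧
    (∀ u v, u ≠ v → Disjoint (B u) (B v)) ∧
    (∀ u, (G.induce (B u)).Connected) ∧
    (∀ u v, H.Adj u v → ∃ a ∈ B u, ∃ b ∈ B v, G.Adj a b)

/-- `G` is `K₅`-minor-free. -/
def K5Free (G : SimpleGraph V) : Prop :=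
  ¬ GraphMinor (⊤ : SimpleGraph (Fin 5)) G

/-- `G` is bipartite: vertices split into two parts so every edge joins the parts. -/
def BipartiteG (G : SimpleGraph V) : Prop :=
  ∃ s : Set V, ∀ ⦃v w⦄, G.Adj v w → ((v ∈ s ∧ w ∉ s) ∨ (w ∈ s ∧ v ∉ s))

/-- `G` has an induced cycle of length `n` (n ≥ 3): an induced-subgraph copy of the
cycle graph of length `n`. -/
def HasInducedCycleLen (G : SimpleGraph V) (n : ℕ) : Prop :=
  3 ≤ n ∧ Nonempty (SimpleGraph.cycleGraph n ↪g G)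

/-- `G` contains a triangle. -/
def HasTriangle (G : SimpleGraph V) : Prop :=
  ∃ a b c, G.Adj a b ∧ G.Adj b c ∧ G.Adj a c

/-- `G` is chordal: every induced cycle is a triangle. -/
def ChordalG (G : SimpleGraph V) : Prop :=
  ∀ n, HasInducedCycleLen G n → n = 3

/-- `G` is bridgeless: every edge lies on some cycle. -/
def BridgelessG (G : SimpleGraph V) : Prop :=
  ∀ e ∈ G.edgeSet, ∃ (v : V) (c : G.Walk v v), c.IsCycle ∧ e ∈ c.edges

/-- `G` is (isomorphic to) a cycle of length `n`. -/
def IsCycleOfLen (G : SimpleGraph V) (n : ℕ) : Prop :=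
  3 ≤ n ∧ Nonempty (G ≃g SimpleGraph.cycleGraph n)

/-- `G` is a cycle. -/
def IsCycleGraph (G : SimpleGraph V) : Prop :=
  ∃ n, IsCycleOfLen G n

/-- `G` is a `0`-sum of `G1` and `G2`: copies of `G1`, `G2` cover `G`,
overlap in exactly one vertex, and every edge comes from `G1` or `G2`. -/
def IsZeroSumDecomp {V1 V2 : Type} (G : SimpleGraph V) (G1 : SimpleGraph V1)
    (G2 : SimpleGraph V2) : Prop :=
  ∃ (f1 : V1 ↪ V) (f2 : V2 ↪ V),
    Set.range f1 ∪ Set.range f2 = Set.univ ∧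
    (∃ v, Set.range f1 ∩ Set.range f2 = {v}) ∧
    (∀ a b, G.Adj a b ↔
      ((∃ x y, f1 x = a ∧ f1 y = b ∧ G1.Adj x y) ∨
       (∃ x y, f2 x = a ∧ f2 y = b ∧ G2.Adj x y)))

/-- `G` is a `1`-sum of `G1` and `G2` along a common edge. -/
def IsOneSumDecomp {V1 V2 : Type} (G : SimpleGraph V) (G1 : SimpleGraph V1)
    (G2 : SimpleGraph V2) : Prop :=
  ∃ (f1 : V1 ↪ V) (f2 : V2 ↪ V) (v w : V),
    v ≠ w ∧
    Set.range f1 ∪ Set.range f2 = Set.univ ∧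
    Set.range f1 ∩ Set.range f2 = {v, w} ∧
    (∃ x y, f1 x = v ∧ f1 y = w ∧ G1.Adj x y) ∧
    (∃ x y, f2 x = v ∧ f2 y = w ∧ G2.Adj x y) ∧
    (∀ a b, G.Adj a b ↔
      ((∃ x y, f1 x = a ∧ f1 y = b ∧ G1.Adj x y) ∨
       (∃ x y, f2 x = a ∧ f2 y = b ∧ G2.Adj x y)))

/-- Ring graphs: obtained, up to adding isolated vertices, from finitely many
(finite) trees and cycles by iterated `0`-sums and `1`-sums. -/
inductive IsRingGraph : {V : Type} → SimpleGraph V → Prop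
  | tree {V : Type} (G : SimpleGraph V) :
      Finite V → G.Connected → G.IsAcyclic → IsRingGraph G
  | cycle {V : Type} (G : SimpleGraph V) : IsCycleGraph G → IsRingGraph G
  | zeroSum {V1 V2 V : Type} {G1 : SimpleGraph V1} {G2 : SimpleGraph V2}
      {G : SimpleGraph V} :
      IsRingGraph G1 → IsRingGraph G2 → IsZeroSumDecomp G G1 G2 → IsRingGraph G
  | oneSum {V1 V2 V : Type} {G1 : SimpleGraph V1} {G2 : SimpleGraph V2}
      {G : SimpleGraph V} :
      IsRingGraph G1 → IsRingGraph G2 → IsOneSumDecomp G G1 G2 → IsRingGraph G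
  | addIsolated {V W : Type} {G : SimpleGraph V} {H : SimpleGraph W} (f : V ↪ W) :
      IsRingGraph G → (∀ a b, H.Adj a b ↔ ∃ x y, f x = a ∧ f y = b ∧ G.Adj x y) →
      IsRingGraph H

/-- An edge of an induced subgraph is an edge of the ambient graph. -/
lemma induce_edge_mem (G : SimpleGraph V) (s : Set V) (e : Sym2 s)
    (he : e ∈ (G.induce s).edgeSet) : e.map Subtype.val ∈ G.edgeSet := by
  induction e using Sym2.ind with
  | _ a b =>
    rw [Sym2.map_pair_eq, SimpleGraph.mem_edgeSet]
    exact he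

/-- Restriction of a vector indexed by the edges of `G` to the edges of the
subgraph of `G` induced on `s`. -/
noncomputable def restrictCut (G : SimpleGraph V) (s : Set V) (p : G.edgeSet → ℤ) :
    (G.induce s).edgeSet → ℤ :=
  fun e => p ⟨e.1.map Subtype.val, induce_edge_mem G s e.1 e.2⟩


namespace SemK5

/-! ### Finite combinatorics on `Fin 5` cut functions -/

def F5n (s : Fin 5 → Bool) (u v : Fin 5) : ℕ := if s u = s v then 0 else 1

def tblN : ℕ → Fin 5 → Bool :=
  fun i u => u != 0 && i.testBit (u.val - 1)

def single (a : Fin 5) : Fin 5 → Bool := fun u => u == a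

def qF (f1 f2 f3 f4 : Fin 5 → Bool) (u v : Fin 5) : Prop :=
  F5n f1 u v + F5n f2 u v + F5n f3 u v + F5n f4 u v = 2

instance (f1 f2 f3 f4 : Fin 5 → Bool) (u v : Fin 5) : Decidable (qF f1 f2 f3 f4 u v) :=
  inferInstanceAs (Decidable (_ = _))

def PF (f1 f2 f3 f4 : Fin 5 → Bool) : Prop :=
  qF f1 f2 f3 f4 0 1 ∧ qF f1 f2 f3 f4 0 2 ∧ qF f1 f2 f3 f4 0 3 ∧ qF f1 f2 f3 f4 0 4 ∧
  qF f1 f2 f3 f4 1 2 ∧ qF f1 f2 f3 f4 1 3 ∧ qF f1 f2 f3 f4 1 4 ∧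
  qF f1 f2 f3 f4 2 3 ∧ qF f1 f2 f3 f4 2 4 ∧ qF f1 f2 f3 f4 3 4

instance (f1 f2 f3 f4 : Fin 5 → Bool) : Decidable (PF f1 f2 f3 f4) :=
  inferInstanceAs (Decidable (_ ∧ _))

def sz (f : Fin 5 → Bool) : ℕ :=
  F5n f 0 1 + F5n f 0 2 + F5n f 0 3 + F5n f 0 4 + F5n f 1 2 + F5n f 1 3 + F5n f 1 4 +
  F5n f 2 3 + F5n f 2 4 + F5n f 3 4

def single4 (i3 i4 : ℕ) (a b : Fin 5) : Prop := ¬ PF (single a) (single b) (tblN i3) (tblN i4)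

instance (i3 i4 : ℕ) (a b : Fin 5) : Decidable (single4 i3 i4 a b) :=
  inferInstanceAs (Decidable (¬ _))

set_option maxHeartbeats 4000000 in
lemma nonexS : ∀ i3 < 16, ∀ i4 < 16, ∀ a b : Fin 5, single4 i3 i4 a b := by decide

lemma szMem : ∀ i < 16, sz (tblN i) = 0 ∨ sz (tblN i) = 4 ∨ sz (tblN i) = 6 := by decide

lemma szSingle : ∀ i < 16, sz (tblN i) = 4 →
    ∃ a : Fin 5, ∀ u v : Fin 5, F5n (tblN i) u v = F5n (single a) u v := by decide

lemma tbl_covers : ∀ s : Fin 5 → Bool, s 0 = false → ∃ i, i < 16 ∧ tblN i = s := by decide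

lemma F5n_not (s : Fin 5 → Bool) (u v : Fin 5) : F5n (fun w => !(s w)) u v = F5n s u v := by
  unfold F5n
  cases hsu : s u <;> cases hsv : s v <;> simp [hsu, hsv]

lemma normRep (s : Fin 5 → Bool) : ∃ i, i < 16 ∧ ∀ u v, F5n s u v = F5n (tblN i) u v := by
  cases hs0 : s 0 with
  | false =>
    obtain ⟨i, hi, hts⟩ := tbl_covers s hs0
    exact ⟨i, hi, fun u v => by rw [hts]⟩
  | true =>
    have h0 : (fun w => !(s w)) 0 = false := by simp [hs0]
    obtain ⟨i, hi, hts⟩ := tbl_covers (fun w => !(s w)) h0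
    exact ⟨i, hi, fun u v => by rw [hts]; exact (F5n_not s u v).symm⟩

lemma PF_trans (f1 f2 f3 f4 g1 g2 g3 g4 : Fin 5 → Bool)
    (h : PF f1 f2 f3 f4)
    (he : ∀ u v : Fin 5, F5n f1 u v + F5n f2 u v + F5n f3 u v + F5n f4 u v
        = F5n g1 u v + F5n g2 u v + F5n g3 u v + F5n g4 u v) : PF g1 g2 g3 g4 := by
  unfold PF qF at h ⊢
  obtain ⟨a1,a2,a3,a4,a5,a6,a7,a8,a9,a10⟩ := h
  exact ⟨by have := he 0 1; omega, by have := he 0 2; omega, by have := he 0 3; omega,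
    by have := he 0 4; omega, by have := he 1 2; omega, by have := he 1 3; omega,
    by have := he 1 4; omega, by have := he 2 3; omega, by have := he 2 4; omega,
    by have := he 3 4; omega⟩

lemma sizes_lemma (m1 m2 m3 m4 : ℕ)
    (h1 : m1 = 0 ∨ m1 = 4 ∨ m1 = 6) (h2 : m2 = 0 ∨ m2 = 4 ∨ m2 = 6)
    (h3 : m3 = 0 ∨ m3 = 4 ∨ m3 = 6) (h4 : m4 = 0 ∨ m4 = 4 ∨ m4 = 6)
    (hs : m1 + m2 + m3 + m4 = 20) :
    (m1 = 4 ∧ m2 = 4) ∨ (m1 = 4 ∧ m3 = 4) ∨ (m1 = 4 ∧ m4 = 4) ∨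
    (m2 = 4 ∧ m3 = 4) ∨ (m2 = 4 ∧ m4 = 4) ∨ (m3 = 4 ∧ m4 = 4) := by omega

/-- No four cuts of `K₅` have cut vectors summing to `2` on every edge. -/
lemma noFour (f1 f2 f3 f4 : Fin 5 → Bool) : ¬ PF f1 f2 f3 f4 := by
  intro h
  obtain ⟨i1, hi1, e1⟩ := normRep f1
  obtain ⟨i2, hi2, e2⟩ := normRep f2
  obtain ⟨i3, hi3, e3⟩ := normRep f3
  obtain ⟨i4, hi4, e4⟩ := normRep f4
  have h' : PF (tblN i1) (tblN i2) (tblN i3) (tblN i4) :=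
    PF_trans _ _ _ _ _ _ _ _ h (fun u v => by
      have := e1 u v; have := e2 u v; have := e3 u v; have := e4 u v; omega)
  have hsz : sz (tblN i1) + sz (tblN i2) + sz (tblN i3) + sz (tblN i4) = 20 := by
    have hc := h'
    unfold PF qF at hc
    obtain ⟨a1,a2,a3,a4,a5,a6,a7,a8,a9,a10⟩ := hc
    unfold sz
    omega
  have m1 := szMem i1 hi1
  have m2 := szMem i2 hi2
  have m3 := szMem i3 hi3
  have m4 := szMem i4 hi4
  rcases sizes_lemma _ _ _ _ m1 m2 m3 m4 hsz with ⟨p,q⟩|⟨p,q⟩|⟨p,q⟩|⟨p,q⟩|⟨p,q⟩|⟨p,q⟩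
  · obtain ⟨a, ha⟩ := szSingle i1 hi1 p
    obtain ⟨b, hb⟩ := szSingle i2 hi2 q
    exact nonexS i3 hi3 i4 hi4 a b (PF_trans _ _ _ _ _ _ _ _ h' (fun u v => by
      have := ha u v; have := hb u v; omega))
  · obtain ⟨a, ha⟩ := szSingle i1 hi1 p
    obtain ⟨b, hb⟩ := szSingle i3 hi3 q
    exact nonexS i2 hi2 i4 hi4 a b (PF_trans _ _ _ _ _ _ _ _ h' (fun u v => by
      have := ha u v; have := hb u v; omega))
  · obtain ⟨a, ha⟩ := szSingle i1 hi1 p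
    obtain ⟨b, hb⟩ := szSingle i4 hi4 q
    exact nonexS i2 hi2 i3 hi3 a b (PF_trans _ _ _ _ _ _ _ _ h' (fun u v => by
      have := ha u v; have := hb u v; omega))
  · obtain ⟨a, ha⟩ := szSingle i2 hi2 p
    obtain ⟨b, hb⟩ := szSingle i3 hi3 q
    exact nonexS i1 hi1 i4 hi4 a b (PF_trans _ _ _ _ _ _ _ _ h' (fun u v => by
      have := ha u v; have := hb u v; omega))
  · obtain ⟨a, ha⟩ := szSingle i2 hi2 p
    obtain ⟨b, hb⟩ := szSingle i4 hi4 q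
    exact nonexS i1 hi1 i3 hi3 a b (PF_trans _ _ _ _ _ _ _ _ h' (fun u v => by
      have := ha u v; have := hb u v; omega))
  · obtain ⟨a, ha⟩ := szSingle i3 hi3 p
    obtain ⟨b, hb⟩ := szSingle i4 hi4 q
    exact nonexS i1 hi1 i2 hi2 a b (PF_trans _ _ _ _ _ _ _ _ h' (fun u v => by
      have := ha u v; have := hb u v; omega))

end SemK5

namespace SemK5

def omem (g : Fin 5 → Bool) : Option (Fin 5) → Bool := fun o => o.elim false g

def Fo (g : Fin 5 → Bool) (p q : Option (Fin 5)) : ℤ :=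
  if omem g p = omem g q then 0 else 1

def L2 : List (Fin 5 → Bool) :=
  [fun _ => false,
   fun u => u == 0 || u == 1,
   fun u => u == 2 || u == 3,
   fun u => u == 0 || u == 2 || u == 4,
   fun u => u == 0 || u == 3 || u == 4,
   fun u => u == 1 || u == 2 || u == 4,
   fun u => u == 1 || u == 3 || u == 4,
   fun u => u == 0 || u == 1 || u == 2 || u == 3]

def L3 : List (Fin 5 → Bool) :=
  [fun u => u == 0 || u == 1,
   fun u => u == 0 || u == 2,
   fun u => u == 0 || u == 3,
   fun u => u == 0 || u == 4,
   fun u => u == 1 || u == 2,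
   fun u => u == 1 || u == 3,
   fun u => u == 1 || u == 4,
   fun u => u == 2 || u == 3,
   fun u => u == 2 || u == 4,
   fun u => u == 3 || u == 4,
   fun _ => true,
   fun _ => true]

set_option maxHeartbeats 1000000 in
lemma keyNum : ∀ p q : Option (Fin 5),
    2 * (L3.map (fun g => Fo g p q)).sum = 3 * (L2.map (fun g => Fo g p q)).sum := by decide

set_option maxHeartbeats 1000000 in
lemma keyNum2 : ∀ p q : Option (Fin 5), p ≠ q →
    (L3.map (fun g => Fo g p q)).sum - (L2.map (fun g => Fo g p q)).sum = 2 := by decide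

lemma Fo_diag (g : Fin 5 → Bool) (p : Option (Fin 5)) : Fo g p p = 0 := if_pos rfl

lemma F5n_cast (s : Fin 5 → Bool) (u v : Fin 5) :
    ((F5n s u v : ℕ) : ℤ) = if s u = s v then (0:ℤ) else 1 := by
  unfold F5n; split <;> simp

end SemK5

open Classical in
lemma cutVec_mk {V : Type} (A : Set V) (a b : V) :
    cutVec A s(a,b) = if (a ∈ A ↔ b ∈ A) then 0 else 1 :=
  Sym2.lift_mk _ a b

lemma cutVec_bool {V : Type} (A : Set V) (a b : V) (x y : Bool)
    (ha : a ∈ A ↔ x = true) (hb : b ∈ A ↔ y = true) :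
    cutVec A s(a,b) = if x = y then 0 else 1 := by
  classical
  rw [cutVec_mk]
  refine if_congr ?_ rfl rfl
  rw [ha, hb]
  constructor
  · intro h; cases x <;> cases y <;> simp_all
  · intro h; rw [h]

lemma cutVec_nonneg {V : Type} (A : Set V) (s : Sym2 V) : 0 ≤ cutVec A s := by
  induction s using Sym2.ind with
  | _ a b =>
    classical
    rw [cutVec_mk]
    split <;> norm_num

lemma cutVec_zero {V : Type} (A : Set V) (a b : V) (h : cutVec A s(a,b) = 0) :
    a ∈ A ↔ b ∈ A := by
  classical
  by_contra hne
  rw [cutVec_mk, if_neg hne] at h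
  exact one_ne_zero h

lemma map_pair_sum {ι E : Type} (L : List ι) (f : ι → E → ℤ) :
    (L.map fun g => ((f g, 1) : (E → ℤ) × ℤ)).sum
      = ((fun e => (L.map fun g => f g e).sum), (L.length : ℤ)) := by
  induction L with
  | nil =>
    refine Prod.ext ?_ ?_
    · funext e; simp
    · simp
  | cons g t ih =>
    simp only [List.map_cons, List.sum_cons, ih, List.length_cons]
    refine Prod.ext ?_ ?_
    · funext e; simp
    · simp only [Prod.snd_add]
      push_cast
      ring

lemma zsplit {E : Type} (S2v S3v : E → ℤ) (key : ∀ e, 2 * S3v e = 3 * S2v e) :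
    ((2:ℕ) • ((((fun e => S3v e - S2v e) : E → ℤ), (4:ℤ)) : (E → ℤ) × ℤ)
        = (((fun e => S2v e) : E → ℤ), (8:ℤ)))
  ∧ ((3:ℕ) • ((((fun e => S3v e - S2v e) : E → ℤ), (4:ℤ)) : (E → ℤ) × ℤ)
        = (((fun e => S3v e) : E → ℤ), (12:ℤ)))
  ∧ (((((fun e => S3v e - S2v e) : E → ℤ), (4:ℤ)) : (E → ℤ) × ℤ)
        = (((fun e => S3v e) : E → ℤ), (12:ℤ)) - (((fun e => S2v e) : E → ℤ), (8:ℤ))) := by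
  refine ⟨?_, ?_, ?_⟩
  · rw [two_nsmul]
    refine Prod.ext ?_ ?_
    · funext e
      have hk := key e
      show (S3v e - S2v e) + (S3v e - S2v e) = S2v e
      omega
    · show (4:ℤ) + 4 = 8
      norm_num
  · rw [succ_nsmul, two_nsmul]
    refine Prod.ext ?_ ?_
    · funext e
      have hk := key e
      show ((S3v e - S2v e) + (S3v e - S2v e)) + (S3v e - S2v e) = S3v e
      omega
    · show ((4:ℤ) + 4) + 4 = 12
      norm_num
  · refine Prod.ext ?_ ?_
    · funext e
      show S3v e - S2v e = S3v e - S2v e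
      rfl
    · show (4:ℤ) = 12 - 8
      norm_num

lemma const_of_connected {V : Type} (G : SimpleGraph V) (s : Set V)
    (hc : (G.induce s).Connected) (A : Set V)
    (hstep : ∀ a b : V, a ∈ s → b ∈ s → G.Adj a b → (a ∈ A ↔ b ∈ A)) :
    ∀ a b : V, a ∈ s → b ∈ s → (a ∈ A ↔ b ∈ A) := by
  have H : ∀ (x y : s), (G.induce s).Walk x y → ((x : V) ∈ A ↔ (y : V) ∈ A) := by
    intro x y w
    induction w with
    | nil => exact Iff.rfl
    | @cons p q r hpq wtail ih =>
      have hadj : G.Adj (p : V) (q : V) := hpq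
      exact (hstep _ _ p.2 q.2 hadj).trans ih
  intro a b ha hb
  obtain ⟨w⟩ := hc.preconnected ⟨a, ha⟩ ⟨b, hb⟩
  exact H _ _ w

/-- If the cut monoid of `G` is seminormal, then `G` is
`K₅`-minor-free. -/
theorem seminormal_K5Free {V : Type} [Fintype V] (G : SimpleGraph V)
    (h : CutSeminormal G) : K5Free G := by
  classical
  rintro ⟨B, hne, hdisj, hconn, hadjH⟩
  -- the class map assigning to each vertex its branch set (if any)
  let c : V → Option (Fin 5) := fun a =>
    if h' : ∃ u, a ∈ B u then some h'.choose else none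
  have hcB : ∀ (a : V) (u : Fin 5), a ∈ B u → c a = some u := by
    intro a u ha
    have hex : ∃ w, a ∈ B w := ⟨u, ha⟩
    have h1 : c a = some hex.choose := dif_pos hex
    have h2 : hex.choose = u := by
      by_contra hne2
      exact Set.disjoint_left.mp (hdisj _ _ hne2) hex.choose_spec ha
    rw [h1, h2]
  have hcB' : ∀ (a : V) (u : Fin 5), c a = some u → a ∈ B u := by
    intro a u hca
    by_cases hex : ∃ w, a ∈ B w
    · obtain ⟨w, hw⟩ := hex
      have h1 := hcB a w hw
      rw [h1] at hca
      cases Option.some.inj hca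
      exact hw
    · have h1 : c a = none := dif_neg hex
      rw [h1] at hca
      cases hca
  -- lifted cut sets
  let Ah : (Fin 5 → Bool) → Set V := fun g => {a | ∃ u, g u = true ∧ a ∈ B u}
  have hAh : ∀ (g : Fin 5 → Bool) (a : V), a ∈ Ah g ↔ SemK5.omem g (c a) = true := by
    intro g a
    constructor
    · rintro ⟨u, hgu, haB⟩
      rw [hcB a u haB]
      exact hgu
    · intro hg
      cases hca : c a with
      | none => rw [hca] at hg; simp [SemK5.omem] at hg
      | some u => rw [hca] at hg; exact ⟨u, hg, hcB' a u hca⟩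
  have hcv : ∀ (g : Fin 5 → Bool) (a b : V),
      cutVec (Ah g) s(a,b) = SemK5.Fo g (c a) (c b) := by
    intro g a b
    unfold SemK5.Fo
    exact cutVec_bool _ _ _ _ _ (hAh g a) (hAh g b)
  have hmemL : ∀ L : List (Fin 5 → Bool),
      (L.map fun g => (((fun e => cutVec (Ah g) e.1), 1) : (G.edgeSet → ℤ) × ℤ)).sum
        ∈ cutMonoid G := by
    intro L
    refine AddSubmonoid.list_sum_mem _ ?_
    intro x hx
    obtain ⟨g, -, rfl⟩ := List.mem_map.mp hx
    exact AddSubmonoid.subset_closure ⟨Ah g, rfl⟩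
  have keyPt : ∀ s : Sym2 V,
      2 * (SemK5.L3.map fun g => cutVec (Ah g) s).sum
        = 3 * (SemK5.L2.map fun g => cutVec (Ah g) s).sum := by
    intro s
    induction s using Sym2.ind with
    | _ a b =>
      simp only [hcv]
      exact SemK5.keyNum (c a) (c b)
  -- the sums of generators
  have hsum2 : (SemK5.L2.map fun g =>
        (((fun e => cutVec (Ah g) e.1), 1) : (G.edgeSet → ℤ) × ℤ)).sum
      = ((fun e : G.edgeSet => (SemK5.L2.map fun g => cutVec (Ah g) e.1).sum), (8:ℤ)) := by
    rw [map_pair_sum SemK5.L2 (fun g => (fun e : G.edgeSet => cutVec (Ah g) e.1))]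
    norm_num [SemK5.L2]
  have hsum3 : (SemK5.L3.map fun g =>
        (((fun e => cutVec (Ah g) e.1), 1) : (G.edgeSet → ℤ) × ℤ)).sum
      = ((fun e : G.edgeSet => (SemK5.L3.map fun g => cutVec (Ah g) e.1).sum), (12:ℤ)) := by
    rw [map_pair_sum SemK5.L3 (fun g => (fun e : G.edgeSet => cutVec (Ah g) e.1))]
    norm_num [SemK5.L3]
  obtain ⟨E2, E3, EZ⟩ := zsplit
    (fun e : G.edgeSet => (SemK5.L2.map fun g => cutVec (Ah g) e.1).sum)
    (fun e : G.edgeSet => (SemK5.L3.map fun g => cutVec (Ah g) e.1).sum)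
    (fun e => keyPt e.1)
  set z : (G.edgeSet → ℤ) × ℤ :=
    ((fun e => (SemK5.L3.map fun g => cutVec (Ah g) e.1).sum
        - (SemK5.L2.map fun g => cutVec (Ah g) e.1).sum), (4:ℤ)) with hzdef
  have hm2 : (2:ℕ) • z ∈ cutMonoid G := by
    rw [E2, ← hsum2]
    exact hmemL SemK5.L2
  have hm3 : (3:ℕ) • z ∈ cutMonoid G := by
    rw [E3, ← hsum3]
    exact hmemL SemK5.L3
  have hmon_le : ∀ x, x ∈ cutMonoid G → x ∈ cutGroup G := by
    intro x hx
    have hle : cutMonoid G ≤ (cutGroup G).toAddSubmonoid :=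
      AddSubmonoid.closure_le.mpr (fun y hy => AddSubgroup.subset_closure hy)
    exact hle hx
  have hzg : z ∈ cutGroup G := by
    rw [EZ, ← hsum2, ← hsum3]
    exact sub_mem (hmon_le _ (hmemL SemK5.L3)) (hmon_le _ (hmemL SemK5.L2))
  have hzm : z ∈ cutMonoid G := h z hzg hm2 hm3
  obtain ⟨l, hlg, hls⟩ := AddSubmonoid.exists_list_of_mem_closure hzm
  have hLA : ∃ LA : List (Set V),
      l = LA.map (fun A => (((fun e => cutVec A e.1), 1) : (G.edgeSet → ℤ) × ℤ)) := by
    clear hls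
    induction l with
    | nil => exact ⟨[], rfl⟩
    | cons x t ih =>
      obtain ⟨LA, rfl⟩ := ih (fun y hy => hlg y (List.mem_cons_of_mem _ hy))
      obtain ⟨A, hA⟩ := hlg x List.mem_cons_self
      exact ⟨A :: LA, by rw [hA, List.map_cons]⟩
  obtain ⟨LA, rfl⟩ := hLA
  rw [map_pair_sum LA (fun A => (fun e : G.edgeSet => cutVec A e.1))] at hls
  have hlen : LA.length = 4 := by
    have h4 := congrArg Prod.snd hls
    rw [hzdef] at h4
    simp only at h4
    exact_mod_cast h4
  rcases LA with _ | ⟨A1, _ | ⟨A2, _ | ⟨A3, _ | ⟨A4, _ | ⟨A5, t⟩⟩⟩⟩⟩ <;>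
    simp only [List.length_cons, List.length_nil] at hlen <;> try omega
  -- pointwise representation
  have hrep : ∀ (s : Sym2 V), s ∈ G.edgeSet →
      (SemK5.L3.map fun g => cutVec (Ah g) s).sum
        - (SemK5.L2.map fun g => cutVec (Ah g) s).sum
      = cutVec A1 s + (cutVec A2 s + (cutVec A3 s + (cutVec A4 s + 0))) := by
    intro s hs
    have h1 := congrArg Prod.fst hls
    rw [hzdef] at h1
    have h2 := congrFun h1.symm ⟨s, hs⟩
    simpa [List.map_cons, List.sum_cons] using h2
  -- every cut in the representation is constant on each branch set
  have hcut0 : ∀ (u : Fin 5) (a b : V), a ∈ B u → b ∈ B u → G.Adj a b →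
      cutVec A1 s(a,b) = 0 ∧ cutVec A2 s(a,b) = 0 ∧
      cutVec A3 s(a,b) = 0 ∧ cutVec A4 s(a,b) = 0 := by
    intro u a b ha hb hab
    have he : s(a,b) ∈ G.edgeSet := G.mem_edgeSet.mpr hab
    have hcc : c a = c b := by rw [hcB a u ha, hcB b u hb]
    have hz0 : (SemK5.L3.map fun g => cutVec (Ah g) s(a,b)).sum
        - (SemK5.L2.map fun g => cutVec (Ah g) s(a,b)).sum = 0 := by
      simp only [hcv, hcc, SemK5.Fo_diag]
      simp
    have hsum := hrep s(a,b) he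
    rw [hz0] at hsum
    have n1 := cutVec_nonneg A1 s(a,b)
    have n2 := cutVec_nonneg A2 s(a,b)
    have n3 := cutVec_nonneg A3 s(a,b)
    have n4 := cutVec_nonneg A4 s(a,b)
    omega
  have hconstF : ∀ A ∈ [A1, A2, A3, A4], ∀ (u : Fin 5) (a b : V),
      a ∈ B u → b ∈ B u → (a ∈ A ↔ b ∈ A) := by
    intro A hA u
    refine const_of_connected G (B u) (hconn u) A ?_
    intro a b ha hb hab
    have h4 := hcut0 u a b ha hb hab
    simp only [List.mem_cons, List.not_mem_nil, or_false] at hA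
    rcases hA with rfl | rfl | rfl | rfl
    · exact cutVec_zero _ _ _ h4.1
    · exact cutVec_zero _ _ _ h4.2.1
    · exact cutVec_zero _ _ _ h4.2.2.1
    · exact cutVec_zero _ _ _ h4.2.2.2
  -- representative points of the branch sets
  choose pt hpt using hne
  let sA : Set V → Fin 5 → Bool := fun A u => decide (pt u ∈ A)
  have hsA : ∀ A ∈ [A1, A2, A3, A4], ∀ (u : Fin 5) (a : V), a ∈ B u →
      (a ∈ A ↔ sA A u = true) := by
    intro A hA u a ha
    rw [hconstF A hA u a (pt u) ha (hpt u)]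
    simp [sA]
  -- the induced equation on the chosen cross edges
  have hfin : ∀ (u v : Fin 5), u ≠ v →
      ((SemK5.F5n (sA A1) u v : ℤ) + (SemK5.F5n (sA A2) u v : ℤ)
        + (SemK5.F5n (sA A3) u v : ℤ) + (SemK5.F5n (sA A4) u v : ℤ)) = 2 := by
    intro u v huv
    obtain ⟨a, ha, b, hb, hab⟩ := hadjH u v ((SimpleGraph.top_adj u v).mpr huv)
    have he : s(a,b) ∈ G.edgeSet := G.mem_edgeSet.mpr hab
    have h1 := hrep s(a,b) he
    have h2 : (SemK5.L3.map fun g => cutVec (Ah g) s(a,b)).sum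
        - (SemK5.L2.map fun g => cutVec (Ah g) s(a,b)).sum = 2 := by
      simp only [hcv, hcB a u ha, hcB b v hb]
      exact SemK5.keyNum2 (some u) (some v) (fun hh => huv (Option.some.inj hh))
    rw [h2] at h1
    have c1 : cutVec A1 s(a,b) = ((SemK5.F5n (sA A1) u v : ℕ) : ℤ) := by
      rw [cutVec_bool A1 a b (sA A1 u) (sA A1 v)
        (hsA A1 (by simp) u a ha) (hsA A1 (by simp) v b hb), SemK5.F5n_cast]
    have c2 : cutVec A2 s(a,b) = ((SemK5.F5n (sA A2) u v : ℕ) : ℤ) := by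
      rw [cutVec_bool A2 a b (sA A2 u) (sA A2 v)
        (hsA A2 (by simp) u a ha) (hsA A2 (by simp) v b hb), SemK5.F5n_cast]
    have c3 : cutVec A3 s(a,b) = ((SemK5.F5n (sA A3) u v : ℕ) : ℤ) := by
      rw [cutVec_bool A3 a b (sA A3 u) (sA A3 v)
        (hsA A3 (by simp) u a ha) (hsA A3 (by simp) v b hb), SemK5.F5n_cast]
    have c4 : cutVec A4 s(a,b) = ((SemK5.F5n (sA A4) u v : ℕ) : ℤ) := by
      rw [cutVec_bool A4 a b (sA A4 u) (sA A4 v)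
        (hsA A4 (by simp) u a ha) (hsA A4 (by simp) v b hb), SemK5.F5n_cast]
    rw [c1, c2, c3, c4] at h1
    omega
  have hq : ∀ (u v : Fin 5), u ≠ v → SemK5.qF (sA A1) (sA A2) (sA A3) (sA A4) u v := by
    intro u v huv
    have := hfin u v huv
    unfold SemK5.qF
    exact_mod_cast this
  exact SemK5.noFour (sA A1) (sA A2) (sA A3) (sA A4)
    ⟨hq 0 1 (by decide), hq 0 2 (by decide), hq 0 3 (by decide), hq 0 4 (by decide),
     hq 1 2 (by decide), hq 1 3 (by decide), hq 1 4 (by decide),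
     hq 2 3 (by decide), hq 2 4 (by decide), hq 3 4 (by decide)⟩
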